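/- Under these hypotheses: (a) the subset X̄' := {℘(Φ, g, h) : Φ ∈ F, g, h ∈ A} is closed under the bracket [X, Y] := ∇_X Y − ∇_Y X, i.e. [X', Y'] ∈ X̄' for all X', Y' ∈ X̄'; and (b) every X' ∈ X̄' preserves Ī, i.e. δ_{X'}(Ī) ⊆ Ī. -/

import Mathlib

/-- (a) `X̄' = ℘(F × (X̄/A·T))` is closed under the bracket `[X, Y] = ∇_X Y − ∇_Y X`;
(b) every `X' ∈ X̄'` preserves the ideal `Ī` generated by `∂_s λ`:
`δ_{X'}(Ī) ⊆ Ī`.  Here `X̄` is realized as `Fin 3 → A`. -/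
theorem ECL_Xbar_prime_subalgebra_preserves_ideal
    {A : Type*} [CommRing A] [Algebra ℝ A]
    -- ∂^ℤ-algebra structure on A
    (D : ℤ → A →ₗ[ℝ] A)
    (hD_comp : ∀ (m n : ℤ) (f : A), D m (D n f) = D (m + n) f)
    (hD_leibniz : ∀ f g : A, D 1 (f * g) = D 1 f * g + f * D 1 g)
    (hD_parts : ∀ f g : A, D (-1) ((f - D 0 f) * g) = (f - D 0 f) * D (-1) g)
    -- the curvature `c` of the ambient space, and λ, κ, τ with λ, κ invertible
    (c : ℝ) (lam kap tau lamI kapI : A)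
    (hlam : lam * lamI = 1) (hkap : kap * kapI = 1)
    -- A is generated by λ, κ, τ, λ⁻¹, κ⁻¹ as an ℝ-subalgebra closed under all ∂^m
    (hgen : ∀ S : Subalgebra ℝ A, lam ∈ S → kap ∈ S → tau ∈ S → lamI ∈ S → kapI ∈ S →
      (∀ (m : ℤ), ∀ f ∈ S, D m f ∈ S) → S = ⊤)
    -- the free A-module X̄ with orthonormal basis T, N, B and its bilinear form
    (T N B : Fin 3 → A)
    (hT : T = ![1, 0, 0]) (hN : N = ![0, 1, 0]) (hB : B = ![0, 0, 1])
    (inner : (Fin 3 → A) → (Fin 3 → A) → A)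
    (hinner : ∀ x y, inner x y = x 0 * y 0 + x 1 * y 1 + x 2 * y 2)
    -- ∂_s := λ⁻¹ ∂¹
    (ds : A → A) (hds : ∀ f, ds f = lamI * D 1 f)
    -- ∇_s, determined by the Leibniz rule and the Frenet–Serret relations
    (nabS : (Fin 3 → A) →ₗ[ℝ] (Fin 3 → A))
    (hnabS_leib : ∀ (f : A) (x : Fin 3 → A), nabS (f • x) = ds f • x + f • nabS x)
    (hnabS_T : nabS T = kap • N)
    (hnabS_N : nabS N = -(kap • T) + tau • B)
    (hnabS_B : nabS B = -(tau • N))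
    -- the variation operators δ_X, ℝ-linear in X
    (del : (Fin 3 → A) →ₗ[ℝ] A →ₗ[ℝ] A)
    (hdel_mul : ∀ (x : Fin 3 → A) (f g : A), del x (f * g) = del x f * g + f * del x g)
    (hdel_D : ∀ (x : Fin 3 → A) (m : ℤ) (f : A), del x (D m f) = D m (del x f))
    (hdel_ds : ∀ (x : Fin 3 → A) (f : A),
      del x (ds f) = ds (del x f) - lamI * del x lam * ds f)
    (hdel_lam : ∀ x, del x lam = inner (lam • T) (nabS x))
    (hdel_kap : ∀ x, del x kap
      = inner N (nabS (nabS x) + c • x) - inner ((2 * kap) • T) (nabS x))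
    (hdel_tau : ∀ x, del x tau
      = ds (inner (kapI • B) (nabS (nabS x) + c • x))
        + inner (kap • B) (nabS x) - inner (tau • T) (nabS x))
    -- the operators ∇_X
    (nab : (Fin 3 → A) → (Fin 3 → A) →ₗ[ℝ] (Fin 3 → A))
    (hnab_leib : ∀ (x : Fin 3 → A) (f : A) (y : Fin 3 → A),
      nab x (f • y) = del x f • y + f • nab x y)
    (hnab_T : ∀ x, nab x T = inner N (nabS x) • N + inner B (nabS x) • B)
    (hnab_N : ∀ x, nab x N
      = inner (kapI • B) (nabS (nabS x) + c • x) • B - inner N (nabS x) • T)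
    (hnab_B : ∀ x, nab x B
      = -(inner B (nabS x) • T) - inner (kapI • B) (nabS (nabS x) + c • x) • N)
    -- the bracket
    (bracket : (Fin 3 → A) → (Fin 3 → A) → (Fin 3 → A))
    (hbracket : ∀ x y, bracket x y = nab x y - nab y x)
    -- F := ∫(A)
    (F : Set A) (hF : F = Set.range (fun f : A => f - D 0 f))
    -- Ī: the smallest ring ideal of A containing ∂_s λ and closed under every ∂^m
    (Ibar : Ideal A)
    (hIbar_mem : ds lam ∈ Ibar)
    (hIbar_D : ∀ (m : ℤ), ∀ f ∈ Ibar, D m f ∈ Ibar)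
    (hIbar_min : ∀ J : Ideal A, ds lam ∈ J → (∀ (m : ℤ), ∀ f ∈ J, D m f ∈ J) → Ibar ≤ J)
    -- the injection ℘(Φ, g, h) = (∂⁻¹(λκg) + Φ)T + gN + hB and its image X̄'
    (pl : A → A → A → (Fin 3 → A))
    (hpl : ∀ Φ g h : A, pl Φ g h = (D (-1) (lam * kap * g) + Φ) • T + g • N + h • B)
    (Xbar' : Set (Fin 3 → A))
    (hXbar' : Xbar' = {x | ∃ Φ g h : A, Φ ∈ F ∧ x = pl Φ g h}) :
    -- (a) X̄' is closed under the bracket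
    (∀ x ∈ Xbar', ∀ y ∈ Xbar', bracket x y ∈ Xbar')
    -- (b) every X' ∈ X̄' preserves Ī
    ∧ (∀ x ∈ Xbar', ∀ f ∈ Ibar, del x f ∈ Ibar) := by

  subst hT hN hB hF hXbar'
  have hD00 : ∀ f : A, D 0 (D 0 f) = D 0 f := fun f => by simpa using hD_comp 0 0 f
  have hD10 : ∀ f : A, D 1 (D 0 f) = D 1 f := fun f => by simpa using hD_comp 1 0 f
  have hD01 : ∀ f : A, D 0 (D 1 f) = D 1 f := fun f => by simpa using hD_comp 0 1 f
  have hD1m1 : ∀ f : A, D 1 (D (-1) f) = D 0 f := fun f => by simpa using hD_comp 1 (-1) f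
  have hD0m1 : ∀ f : A, D 0 (D (-1) f) = D (-1) f := fun f => by simpa using hD_comp 0 (-1) f
  have hm11 : ∀ f : A, D (-1) (D 1 f) = D 0 f := fun f => by simpa using hD_comp (-1) 1 f
  have hDm10 : ∀ f : A, D (-1) (D 0 f) = D (-1) f := fun f => by simpa using hD_comp (-1) 0 f
  have hvec : ∀ f₁ f₂ f₃ : A,
      f₁ • (![1, 0, 0] : Fin 3 → A) + f₂ • ![0, 1, 0] + f₃ • ![0, 0, 1] = ![f₁, f₂, f₃] := by
    intro f₁ f₂ f₃; funext i; fin_cases i <;> simp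
  have hIT : ∀ (f : A) (z : Fin 3 → A), inner (f • ![1, 0, 0]) z = f * z 0 := by
    intro f z; rw [hinner]; simp
  have hIN : ∀ z : Fin 3 → A, inner ![0, 1, 0] z = z 1 := by
    intro z; rw [hinner]; simp
  have hIB : ∀ z : Fin 3 → A, inner ![0, 0, 1] z = z 2 := by
    intro z; rw [hinner]; simp
  have hIBf : ∀ (f : A) (z : Fin 3 → A), inner (f • ![0, 0, 1]) z = f * z 2 := by
    intro f z; rw [hinner]; simp
  have nabS_vec : ∀ f₁ f₂ f₃ : A, nabS ![f₁, f₂, f₃] =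
      ![lamI * D 1 f₁ - kap * f₂, kap * f₁ + lamI * D 1 f₂ - tau * f₃,
        tau * f₂ + lamI * D 1 f₃] := by
    intro f₁ f₂ f₃
    rw [← hvec f₁ f₂ f₃, map_add, map_add, hnabS_leib, hnabS_leib, hnabS_leib,
      hnabS_T, hnabS_N, hnabS_B, hds, hds, hds]
    funext i; fin_cases i <;> simp <;> ring
  have nab_vec : ∀ (z : Fin 3 → A) (f₁ f₂ f₃ : A), nab z ![f₁, f₂, f₃] =
      ![del z f₁ - f₂ * inner ![0, 1, 0] (nabS z) - f₃ * inner ![0, 0, 1] (nabS z),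
        del z f₂ + f₁ * inner ![0, 1, 0] (nabS z)
          - f₃ * inner (kapI • ![0, 0, 1]) (nabS (nabS z) + c • z),
        del z f₃ + f₁ * inner ![0, 0, 1] (nabS z)
          + f₂ * inner (kapI • ![0, 0, 1]) (nabS (nabS z) + c • z)] := by
    intro z f₁ f₂ f₃
    rw [← hvec f₁ f₂ f₃, map_add, map_add, hnab_leib, hnab_leib, hnab_leib,
      hnab_T, hnab_N, hnab_B]
    funext i; fin_cases i <;> simp <;> ring
  have hmem_intro : ∀ z : Fin 3 → A, D 0 (z 0) = D (-1) (lam * kap * z 1) →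
      z ∈ {x | ∃ Φ g h : A, Φ ∈ Set.range (fun f : A => f - D 0 f) ∧ x = pl Φ g h} := by
    intro z hz
    have hz0 : D 0 (z 0 - D (-1) (lam * kap * z 1)) = 0 := by
      rw [map_sub, hz, hD0m1, sub_self]
    refine ⟨z 0 - D (-1) (lam * kap * z 1), z 1, z 2,
      ⟨z 0 - D (-1) (lam * kap * z 1), ?_⟩, ?_⟩
    · show z 0 - D (-1) (lam * kap * z 1) - D 0 (z 0 - D (-1) (lam * kap * z 1)) = _
      rw [hz0, sub_zero]
    · rw [hpl, hvec]
      funext i; fin_cases i <;> simp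
  have hlam0 : ∀ z ∈ {x | ∃ Φ g h : A, Φ ∈ Set.range (fun f : A => f - D 0 f) ∧ x = pl Φ g h},
      D 1 (del z lam) = 0 := by
    intro z hz
    obtain ⟨Phi, g, h, hPhiF, rfl⟩ := hz
    obtain ⟨f0, hf0⟩ := hPhiF
    have hPhi0 : D 0 Phi = 0 := by
      rw [← hf0]; show D 0 (f0 - D 0 f0) = 0; rw [map_sub, hD00, sub_self]
    have hPhi1 : D 1 Phi = 0 := by rw [← hD10, hPhi0, map_zero]
    rw [hpl, hvec, hdel_lam, hIT, nabS_vec]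
    simp only [Matrix.cons_val_zero]
    have hD1a1 : D 1 (D (-1) (lam * kap * g) + Phi) = D 0 (lam * kap * g) := by
      rw [map_add, hD1m1, hPhi1, add_zero]
    rw [hD1a1]
    have hlu : lam * (lamI * D 0 (lam * kap * g) - kap * g)
        = D 0 (lam * kap * g) - lam * kap * g := by
      linear_combination D 0 (lam * kap * g) * hlam
    rw [hlu, map_sub, hD10, sub_self]
  refine ⟨?_, ?_⟩
  · intro x hx y hy
    obtain ⟨Phi, g, h, hPhiF, rfl⟩ := hx
    obtain ⟨Psi, p, q, hPsiF, rfl⟩ := hy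
    obtain ⟨f1, hf1⟩ := hPhiF
    obtain ⟨f2, hf2⟩ := hPsiF
    have hPhi0 : D 0 Phi = 0 := by
      rw [← hf1]; show D 0 (f1 - D 0 f1) = 0; rw [map_sub, hD00, sub_self]
    have hPsi0 : D 0 Psi = 0 := by
      rw [← hf2]; show D 0 (f2 - D 0 f2) = 0; rw [map_sub, hD00, sub_self]
    rw [hpl, hpl, hvec, hvec]
    have h1x : nabS ![(D (-1) (lam * kap * g) + Phi), g, h] = ![(lamI * D 1 (D (-1) (lam * kap * g) + Phi) - kap * g), (kap * (D (-1) (lam * kap * g) + Phi) + lamI * D 1 g - tau * h), (tau * g + lamI * D 1 h)] := nabS_vec (D (-1) (lam * kap * g) + Phi) g h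
    have h1y : nabS ![(D (-1) (lam * kap * p) + Psi), p, q] = ![(lamI * D 1 (D (-1) (lam * kap * p) + Psi) - kap * p), (kap * (D (-1) (lam * kap * p) + Psi) + lamI * D 1 p - tau * q), (tau * p + lamI * D 1 q)] := nabS_vec (D (-1) (lam * kap * p) + Psi) p q
    have h2x : nabS (nabS ![(D (-1) (lam * kap * g) + Phi), g, h]) =
        ![lamI * D 1 (lamI * D 1 (D (-1) (lam * kap * g) + Phi) - kap * g) - kap * (kap * (D (-1) (lam * kap * g) + Phi) + lamI * D 1 g - tau * h), kap * (lamI * D 1 (D (-1) (lam * kap * g) + Phi) - kap * g) + lamI * D 1 (kap * (D (-1) (lam * kap * g) + Phi) + lamI * D 1 g - tau * h) - tau * (tau * g + lamI * D 1 h),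
          tau * (kap * (D (-1) (lam * kap * g) + Phi) + lamI * D 1 g - tau * h) + lamI * D 1 (tau * g + lamI * D 1 h)] := by
      rw [h1x]; exact nabS_vec (lamI * D 1 (D (-1) (lam * kap * g) + Phi) - kap * g) (kap * (D (-1) (lam * kap * g) + Phi) + lamI * D 1 g - tau * h) (tau * g + lamI * D 1 h)
    have h2y : nabS (nabS ![(D (-1) (lam * kap * p) + Psi), p, q]) =
        ![lamI * D 1 (lamI * D 1 (D (-1) (lam * kap * p) + Psi) - kap * p) - kap * (kap * (D (-1) (lam * kap * p) + Psi) + lamI * D 1 p - tau * q), kap * (lamI * D 1 (D (-1) (lam * kap * p) + Psi) - kap * p) + lamI * D 1 (kap * (D (-1) (lam * kap * p) + Psi) + lamI * D 1 p - tau * q) - tau * (tau * p + lamI * D 1 q),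
          tau * (kap * (D (-1) (lam * kap * p) + Psi) + lamI * D 1 p - tau * q) + lamI * D 1 (tau * p + lamI * D 1 q)] := by
      rw [h1y]; exact nabS_vec (lamI * D 1 (D (-1) (lam * kap * p) + Psi) - kap * p) (kap * (D (-1) (lam * kap * p) + Psi) + lamI * D 1 p - tau * q) (tau * p + lamI * D 1 q)
    have hiN1x : inner ![0, 1, 0] (nabS ![(D (-1) (lam * kap * g) + Phi), g, h]) = (kap * (D (-1) (lam * kap * g) + Phi) + lamI * D 1 g - tau * h) := by
      rw [hIN, h1x]; simp only [Matrix.cons_val_one, Matrix.head_cons, Matrix.cons_val_zero]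
    have hiN1y : inner ![0, 1, 0] (nabS ![(D (-1) (lam * kap * p) + Psi), p, q]) = (kap * (D (-1) (lam * kap * p) + Psi) + lamI * D 1 p - tau * q) := by
      rw [hIN, h1y]; simp only [Matrix.cons_val_one, Matrix.head_cons, Matrix.cons_val_zero]
    have hiB1x : inner ![0, 0, 1] (nabS ![(D (-1) (lam * kap * g) + Phi), g, h]) = (tau * g + lamI * D 1 h) := by
      rw [hIB, h1x]; simp only [Matrix.cons_val_two, Matrix.tail_cons, Matrix.head_cons]
    have hiB1y : inner ![0, 0, 1] (nabS ![(D (-1) (lam * kap * p) + Psi), p, q]) = (tau * p + lamI * D 1 q) := by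
      rw [hIB, h1y]; simp only [Matrix.cons_val_two, Matrix.tail_cons, Matrix.head_cons]
    have hiex : inner (kapI • ![0, 0, 1]) (nabS (nabS ![(D (-1) (lam * kap * g) + Phi), g, h]) + c • ![(D (-1) (lam * kap * g) + Phi), g, h]) = (kapI * (tau * (kap * (D (-1) (lam * kap * g) + Phi) + lamI * D 1 g - tau * h) + lamI * D 1 (tau * g + lamI * D 1 h) + algebraMap ℝ A c * h)) := by
      rw [hIBf, Pi.add_apply, h2x, Pi.smul_apply]
      simp only [Matrix.cons_val_two, Matrix.tail_cons, Matrix.head_cons, Algebra.smul_def]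
    have hiey : inner (kapI • ![0, 0, 1]) (nabS (nabS ![(D (-1) (lam * kap * p) + Psi), p, q]) + c • ![(D (-1) (lam * kap * p) + Psi), p, q]) = (kapI * (tau * (kap * (D (-1) (lam * kap * p) + Psi) + lamI * D 1 p - tau * q) + lamI * D 1 (tau * p + lamI * D 1 q) + algebraMap ℝ A c * q)) := by
      rw [hIBf, Pi.add_apply, h2y, Pi.smul_apply]
      simp only [Matrix.cons_val_two, Matrix.tail_cons, Matrix.head_cons, Algebra.smul_def]
    have hiNNx : inner ![0, 1, 0] (nabS (nabS ![(D (-1) (lam * kap * g) + Phi), g, h]) + c • ![(D (-1) (lam * kap * g) + Phi), g, h])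
        = kap * (lamI * D 1 (D (-1) (lam * kap * g) + Phi) - kap * g) + lamI * D 1 (kap * (D (-1) (lam * kap * g) + Phi) + lamI * D 1 g - tau * h) - tau * (tau * g + lamI * D 1 h) + algebraMap ℝ A c * g := by
      rw [hIN, Pi.add_apply, h2x, Pi.smul_apply]
      simp only [Matrix.cons_val_one, Matrix.head_cons, Matrix.cons_val_zero, Algebra.smul_def]
    have hiNNy : inner ![0, 1, 0] (nabS (nabS ![(D (-1) (lam * kap * p) + Psi), p, q]) + c • ![(D (-1) (lam * kap * p) + Psi), p, q])
        = kap * (lamI * D 1 (D (-1) (lam * kap * p) + Psi) - kap * p) + lamI * D 1 (kap * (D (-1) (lam * kap * p) + Psi) + lamI * D 1 p - tau * q) - tau * (tau * p + lamI * D 1 q) + algebraMap ℝ A c * p := by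
      rw [hIN, Pi.add_apply, h2y, Pi.smul_apply]
      simp only [Matrix.cons_val_one, Matrix.head_cons, Matrix.cons_val_zero, Algebra.smul_def]
    have hi2kTx : inner ((2 * kap) • ![1, 0, 0]) (nabS ![(D (-1) (lam * kap * g) + Phi), g, h]) = 2 * kap * (lamI * D 1 (D (-1) (lam * kap * g) + Phi) - kap * g) := by
      rw [hIT, h1x]; simp only [Matrix.cons_val_zero]
    have hi2kTy : inner ((2 * kap) • ![1, 0, 0]) (nabS ![(D (-1) (lam * kap * p) + Psi), p, q]) = 2 * kap * (lamI * D 1 (D (-1) (lam * kap * p) + Psi) - kap * p) := by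
      rw [hIT, h1y]; simp only [Matrix.cons_val_zero]
    have hdlamx : del ![(D (-1) (lam * kap * g) + Phi), g, h] lam = lam * (lamI * D 1 (D (-1) (lam * kap * g) + Phi) - kap * g) := by
      rw [hdel_lam, hIT, h1x]; simp only [Matrix.cons_val_zero]
    have hdlamy : del ![(D (-1) (lam * kap * p) + Psi), p, q] lam = lam * (lamI * D 1 (D (-1) (lam * kap * p) + Psi) - kap * p) := by
      rw [hdel_lam, hIT, h1y]; simp only [Matrix.cons_val_zero]
    have hdkapx : del ![(D (-1) (lam * kap * g) + Phi), g, h] kap = kap * (lamI * D 1 (D (-1) (lam * kap * g) + Phi) - kap * g) + lamI * D 1 (kap * (D (-1) (lam * kap * g) + Phi) + lamI * D 1 g - tau * h) - tau * (tau * g + lamI * D 1 h)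
        + algebraMap ℝ A c * g - 2 * kap * (lamI * D 1 (D (-1) (lam * kap * g) + Phi) - kap * g) := by
      rw [hdel_kap, hiNNx, hi2kTx]
    have hdkapy : del ![(D (-1) (lam * kap * p) + Psi), p, q] kap = kap * (lamI * D 1 (D (-1) (lam * kap * p) + Psi) - kap * p) + lamI * D 1 (kap * (D (-1) (lam * kap * p) + Psi) + lamI * D 1 p - tau * q) - tau * (tau * p + lamI * D 1 q)
        + algebraMap ℝ A c * p - 2 * kap * (lamI * D 1 (D (-1) (lam * kap * p) + Psi) - kap * p) := by
      rw [hdel_kap, hiNNy, hi2kTy]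
    have hdw2 : del ![(D (-1) (lam * kap * g) + Phi), g, h] (lam * kap * p)
        = (del ![(D (-1) (lam * kap * g) + Phi), g, h] lam * kap + lam * del ![(D (-1) (lam * kap * g) + Phi), g, h] kap) * p + lam * kap * del ![(D (-1) (lam * kap * g) + Phi), g, h] p := by
      rw [hdel_mul, hdel_mul]
    have hdw1 : del ![(D (-1) (lam * kap * p) + Psi), p, q] (lam * kap * g)
        = (del ![(D (-1) (lam * kap * p) + Psi), p, q] lam * kap + lam * del ![(D (-1) (lam * kap * p) + Psi), p, q] kap) * g + lam * kap * del ![(D (-1) (lam * kap * p) + Psi), p, q] g := by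
      rw [hdel_mul, hdel_mul]
    have hnabxy : nab ![(D (-1) (lam * kap * g) + Phi), g, h] ![(D (-1) (lam * kap * p) + Psi), p, q] =
        ![del ![(D (-1) (lam * kap * g) + Phi), g, h] (D (-1) (lam * kap * p) + Psi) - p * (kap * (D (-1) (lam * kap * g) + Phi) + lamI * D 1 g - tau * h) - q * (tau * g + lamI * D 1 h),
          del ![(D (-1) (lam * kap * g) + Phi), g, h] p + (D (-1) (lam * kap * p) + Psi) * (kap * (D (-1) (lam * kap * g) + Phi) + lamI * D 1 g - tau * h) - q * (kapI * (tau * (kap * (D (-1) (lam * kap * g) + Phi) + lamI * D 1 g - tau * h) + lamI * D 1 (tau * g + lamI * D 1 h) + algebraMap ℝ A c * h)),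
          del ![(D (-1) (lam * kap * g) + Phi), g, h] q + (D (-1) (lam * kap * p) + Psi) * (tau * g + lamI * D 1 h) + p * (kapI * (tau * (kap * (D (-1) (lam * kap * g) + Phi) + lamI * D 1 g - tau * h) + lamI * D 1 (tau * g + lamI * D 1 h) + algebraMap ℝ A c * h))] := by
      rw [nab_vec, hiN1x, hiB1x, hiex]
    have hnabyx : nab ![(D (-1) (lam * kap * p) + Psi), p, q] ![(D (-1) (lam * kap * g) + Phi), g, h] =
        ![del ![(D (-1) (lam * kap * p) + Psi), p, q] (D (-1) (lam * kap * g) + Phi) - g * (kap * (D (-1) (lam * kap * p) + Psi) + lamI * D 1 p - tau * q) - h * (tau * p + lamI * D 1 q),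
          del ![(D (-1) (lam * kap * p) + Psi), p, q] g + (D (-1) (lam * kap * g) + Phi) * (kap * (D (-1) (lam * kap * p) + Psi) + lamI * D 1 p - tau * q) - h * (kapI * (tau * (kap * (D (-1) (lam * kap * p) + Psi) + lamI * D 1 p - tau * q) + lamI * D 1 (tau * p + lamI * D 1 q) + algebraMap ℝ A c * q)),
          del ![(D (-1) (lam * kap * p) + Psi), p, q] h + (D (-1) (lam * kap * g) + Phi) * (tau * p + lamI * D 1 q) + g * (kapI * (tau * (kap * (D (-1) (lam * kap * p) + Psi) + lamI * D 1 p - tau * q) + lamI * D 1 (tau * p + lamI * D 1 q) + algebraMap ℝ A c * q))] := by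
      rw [nab_vec, hiN1y, hiB1y, hiey]
    have hb0 : bracket ![(D (-1) (lam * kap * g) + Phi), g, h] ![(D (-1) (lam * kap * p) + Psi), p, q] 0
        = del ![(D (-1) (lam * kap * g) + Phi), g, h] (D (-1) (lam * kap * p) + Psi) - p * (kap * (D (-1) (lam * kap * g) + Phi) + lamI * D 1 g - tau * h) - q * (tau * g + lamI * D 1 h) - (del ![(D (-1) (lam * kap * p) + Psi), p, q] (D (-1) (lam * kap * g) + Phi) - g * (kap * (D (-1) (lam * kap * p) + Psi) + lamI * D 1 p - tau * q) - h * (tau * p + lamI * D 1 q)) := by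
      rw [hbracket, hnabxy, hnabyx]
      simp only [Pi.sub_apply, Matrix.cons_val_zero]
    have hb1 : bracket ![(D (-1) (lam * kap * g) + Phi), g, h] ![(D (-1) (lam * kap * p) + Psi), p, q] 1
        = del ![(D (-1) (lam * kap * g) + Phi), g, h] p + (D (-1) (lam * kap * p) + Psi) * (kap * (D (-1) (lam * kap * g) + Phi) + lamI * D 1 g - tau * h) - q * (kapI * (tau * (kap * (D (-1) (lam * kap * g) + Phi) + lamI * D 1 g - tau * h) + lamI * D 1 (tau * g + lamI * D 1 h) + algebraMap ℝ A c * h)) - (del ![(D (-1) (lam * kap * p) + Psi), p, q] g + (D (-1) (lam * kap * g) + Phi) * (kap * (D (-1) (lam * kap * p) + Psi) + lamI * D 1 p - tau * q) - h * (kapI * (tau * (kap * (D (-1) (lam * kap * p) + Psi) + lamI * D 1 p - tau * q) + lamI * D 1 (tau * p + lamI * D 1 q) + algebraMap ℝ A c * q))) := by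
      rw [hbracket, hnabxy, hnabyx]
      simp only [Pi.sub_apply, Matrix.cons_val_one, Matrix.head_cons, Matrix.cons_val_zero]
    have hda2 : del ![(D (-1) (lam * kap * g) + Phi), g, h] (D (-1) (lam * kap * p) + Psi) = D (-1) (del ![(D (-1) (lam * kap * g) + Phi), g, h] (lam * kap * p)) + del ![(D (-1) (lam * kap * g) + Phi), g, h] Psi := by
      rw [map_add, hdel_D]
    have hda1 : del ![(D (-1) (lam * kap * p) + Psi), p, q] (D (-1) (lam * kap * g) + Phi) = D (-1) (del ![(D (-1) (lam * kap * p) + Psi), p, q] (lam * kap * g)) + del ![(D (-1) (lam * kap * p) + Psi), p, q] Phi := by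
      rw [map_add, hdel_D]
    have hdPsi1 : D 1 (del ![(D (-1) (lam * kap * g) + Phi), g, h] Psi) = 0 := by
      have h0 : D 0 (del ![(D (-1) (lam * kap * g) + Phi), g, h] Psi) = 0 := by rw [← hdel_D, hPsi0, map_zero]
      rw [← hD10, h0, map_zero]
    have hdPhi1 : D 1 (del ![(D (-1) (lam * kap * p) + Psi), p, q] Phi) = 0 := by
      have h0 : D 0 (del ![(D (-1) (lam * kap * p) + Psi), p, q] Phi) = 0 := by rw [← hdel_D, hPhi0, map_zero]
      rw [← hD10, h0, map_zero]
    have key : del ![(D (-1) (lam * kap * g) + Phi), g, h] (lam * kap * p) - del ![(D (-1) (lam * kap * p) + Psi), p, q] (lam * kap * g) - lam * kap * (del ![(D (-1) (lam * kap * g) + Phi), g, h] p + (D (-1) (lam * kap * p) + Psi) * (kap * (D (-1) (lam * kap * g) + Phi) + lamI * D 1 g - tau * h) - q * (kapI * (tau * (kap * (D (-1) (lam * kap * g) + Phi) + lamI * D 1 g - tau * h) + lamI * D 1 (tau * g + lamI * D 1 h) + algebraMap ℝ A c * h)) - (del ![(D (-1) (lam * kap * p) + Psi), p, q] g + (D (-1)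 (lam * kap * g) + Phi) * (kap * (D (-1) (lam * kap * p) + Psi) + lamI * D 1 p - tau * q) - h * (kapI * (tau * (kap * (D (-1) (lam * kap * p) + Psi) + lamI * D 1 p - tau * q) + lamI * D 1 (tau * p + lamI * D 1 q) + algebraMap ℝ A c * q))))
        = D 1 (p * (kap * (D (-1) (lam * kap * g) + Phi) + lamI * D 1 g - tau * h)) + D 1 (q * (tau * g + lamI * D 1 h)) - (D 1 (g * (kap * (D (-1) (lam * kap * p) + Psi) + lamI * D 1 p - tau * q)) + D 1 (h * (tau * p + lamI * D 1 q))) := by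
      rw [hdw2, hdw1, hdlamx, hdkapx, hdlamy, hdkapy,
        hD_leibniz, hD_leibniz, hD_leibniz, hD_leibniz]
      linear_combination (-(D 1 g) * (D (-1) (lam * kap * p)) * kap - (D 1 g) * Psi * kap + (D 1 g) * kap * kapI * q * tau - (D 1 h) * p * tau + (D 1 p) * (D (-1) (lam * kap * g)) * kap + (D 1 p) * Phi * kap - (D 1 p) * h * kap * kapI * tau + (D 1 q) * g * tau + (D 1 (tau * g + lamI * D 1 h)) * kap * kapI * q - (D 1 (tau * p + lamI * D 1 q)) * h * kap * kapI + (D 1 (kap * (D (-1) (lam * kap * g) + Phi) + lamI * D 1 g - tau * h)) * p - (D 1 (kap * (D (-1) (lam * kap * p) + Psi) + lamI * D 1 p - tau * q)) * g) * hlam + ((D 1 g) * q * tau - (D 1 p) * h * tau + (D 1 (tau * g + lamI * D 1 h)) * q - (D 1 (tau * p + lamI * D 1 q)) * h + (D (-1) (lam * kap * g)) * kap * lam * q * tau - (D (-1) (lam * kap * p)) * h * kap * lam * tau + Phi * kap * lam * q * tau - Psi * h * kap * lam * tau) * hkap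
    have hlkZ1 : lam * kap * (del ![(D (-1) (lam * kap * g) + Phi), g, h] p + (D (-1) (lam * kap * p) + Psi) * (kap * (D (-1) (lam * kap * g) + Phi) + lamI * D 1 g - tau * h) - q * (kapI * (tau * (kap * (D (-1) (lam * kap * g) + Phi) + lamI * D 1 g - tau * h) + lamI * D 1 (tau * g + lamI * D 1 h) + algebraMap ℝ A c * h)) - (del ![(D (-1) (lam * kap * p) + Psi), p, q] g + (D (-1) (lam * kap * g) + Phi) * (kap * (D (-1) (lam * kap * p) + Psi) + lamI * D 1 p - tau * q) - h * (kapI * (tau * (kap * (D (-1) (lam * kap * p) + Psi) + lamI * D 1 p - tau * q) + lamI * D 1 (tau * p + lamI * D 1 q) + algebraMap ℝ A c * q))))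
        = del ![(D (-1) (lam * kap * g) + Phi), g, h] (lam * kap * p) - del ![(D (-1) (lam * kap * p) + Psi), p, q] (lam * kap * g)
          - (D 1 (p * (kap * (D (-1) (lam * kap * g) + Phi) + lamI * D 1 g - tau * h)) + D 1 (q * (tau * g + lamI * D 1 h)) - (D 1 (g * (kap * (D (-1) (lam * kap * p) + Psi) + lamI * D 1 p - tau * q)) + D 1 (h * (tau * p + lamI * D 1 q)))) := by
      linear_combination (-1 : A) * key
    refine hmem_intro _ ?_
    rw [hb0, hb1, hda2, hda1, ← hm11, ← hDm10 (lam * kap * (del ![(D (-1) (lam * kap * g) + Phi), g, h] p + (D (-1) (lam * kap * p) + Psi) * (kap * (D (-1) (lam * kap * g) + Phi) + lamI * D 1 g - tau * h) - q * (kapI * (tau * (kap * (D (-1) (lam * kap * g) + Phi) + lamI * D 1 g - tau * h) + lamI * D 1 (tau * g + lamI * D 1 h) + algebraMap ℝ A c * h)) - (del ![(D (-1) (lam * kap * p) + Psi), p, q] g + (D (-1) (lam * kap * g) + Phi) * (kap * (D (-1) (lam * kap * p) + Psi) + lamI * D 1 p - tau * q) - h * (kapI * (tau * (kap * (D (-1)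 (lam * kap * p) + Psi) + lamI * D 1 p - tau * q) + lamI * D 1 (tau * p + lamI * D 1 q) + algebraMap ℝ A c * q)))))]
    refine congrArg (⇑(D (-1))) ?_
    rw [hlkZ1]
    simp only [map_sub, map_add, hD1m1, hD01, hdPsi1, hdPhi1]
    ring
  · intro x hx f hf
    have hds0 : ds (del x lam) = 0 := by rw [hds, hlam0 x hx, mul_zero]
    refine (hIbar_min
      { carrier := {f | f ∈ Ibar ∧ del x f ∈ Ibar},
        add_mem' := fun ha hb => ⟨Ibar.add_mem ha.1 hb.1, by
          rw [map_add]; exact Ibar.add_mem ha.2 hb.2⟩,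
        zero_mem' := ⟨Ibar.zero_mem, by rw [map_zero]; exact Ibar.zero_mem⟩,
        smul_mem' := fun a f' hf' => ⟨Ibar.smul_mem a hf'.1, by
          rw [smul_eq_mul, hdel_mul]
          exact Ibar.add_mem (Ideal.mul_mem_left _ _ hf'.1) (Ideal.mul_mem_left _ _ hf'.2)⟩ }
      ⟨hIbar_mem, ?_⟩ ?_ hf).2
    · rw [hdel_ds, hds0, zero_sub]
      exact neg_mem (Ideal.mul_mem_left _ _ hIbar_mem)
    · intro m f' hfJ
      exact ⟨hIbar_D m f' hfJ.1, by rw [hdel_D]; exact hIbar_D m _ hfJ.2⟩
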